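/- There exists a countable Hausdorff topological space X (the Arhangelskii–Franklin space X = ⋃_n ℕ^n, where a set U is a neighborhood of a finite sequence s iff s ∈ U and U contains s⌢m for all but finitely many m ∈ ℕ) and a compact-preserving function f : X → ℝ that is locally infinite and discontinuous at every point of X. -/

import Mathlib

open Filter Topology Set

def afOpen (U : Set (List ℕ)) : Prop :=
  ∀ s ∈ U, ∀ᶠ m in Filter.atTop, s ++ [m] ∈ U

def afTop : TopologicalSpace (List ℕ) where
  IsOpen := afOpen
  isOpen_univ := fun s _ => Filter.Eventually.of_forall fun _ => trivial
  isOpen_inter := fun U V hU hV s hs =>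
    ((hU s hs.1).and (hV s hs.2)).mono fun _ h => h
  isOpen_sUnion := fun S hS s hs => by
    obtain ⟨U, hU, hsU⟩ := hs
    exact (hS U hU s hsU).mono fun m hm => ⟨U, hU, hm⟩

theorem prefix_append_singleton {p v : List ℕ} {m : ℕ} (h : p <+: v ++ [m]) :
    p <+: v ∨ p = v ++ [m] := by
  rcases le_or_gt p.length v.length with hl | hl
  · exact Or.inl (List.prefix_of_prefix_length_le h ⟨[m], rfl⟩ hl)
  · right
    apply h.eq_of_length
    have := h.length_le
    simp only [List.length_append, List.length_singleton] at this ⊢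
    omega

theorem afOpen_aux (x : List ℕ) (P : Set (List ℕ))
    (hP : ∀ v : List ℕ, {m : ℕ | v ++ [m] ∈ P}.Subsingleton) :
    afOpen {v | x <+: v ∧ ∀ p ∈ P, ¬ p <+: v} := by
  intro v hv
  have hfin : {m : ℕ | v ++ [m] ∈ P}.Finite := (hP v).finite
  have hev : ∀ᶠ m in Filter.cofinite, v ++ [m] ∉ P := hfin.eventually_cofinite_notMem
  rw [Nat.cofinite_eq_atTop] at hev
  filter_upwards [hev] with m hm
  refine ⟨hv.1.trans ⟨[m], rfl⟩, fun p hp hpre => ?_⟩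
  rcases prefix_append_singleton hpre with h | h
  · exact hv.2 p hp h
  · exact hm (h ▸ hp)

/-- separation helper -/
theorem afSep (s t : List ℕ) (hst : s ≠ t) (h : ¬ t <+: s) :
    ∃ u v : Set (List ℕ), afOpen u ∧ afOpen v ∧ s ∈ u ∧ t ∈ v ∧ Disjoint u v := by
  by_cases hs : s <+: t
  · -- t strictly extends s
    obtain ⟨d, rfl⟩ := hs
    cases d with
    | nil => simp at hst
    | cons a r =>
      refine ⟨{v | s <+: v ∧ ∀ p ∈ ({s ++ [a]} : Set (List ℕ)), ¬ p <+: v},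
        {v | (s ++ a :: r) <+: v ∧ ∀ p ∈ (∅ : Set (List ℕ)), ¬ p <+: v},
        afOpen_aux _ _ ?_, afOpen_aux _ _ ?_, ⟨List.prefix_refl s, ?_⟩,
        ⟨List.prefix_refl _, by simp⟩, ?_⟩
      · intro v m hm m' hm'
        simp only [Set.mem_setOf_eq, Set.mem_singleton_iff] at hm hm'
        have := hm.trans hm'.symm
        simpa using List.append_cancel_left this
      · intro v; simp [Set.Subsingleton]
      · intro p hp hps
        simp only [Set.mem_singleton_iff] at hp
        subst hp
        have := hps.length_le
        simp at this
      · rw [Set.disjoint_left]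
        rintro w ⟨hw1, hw2⟩ ⟨hw3, -⟩
        refine hw2 (s ++ [a]) rfl ?_
        calc s ++ [a] <+: s ++ a :: r := ⟨r, by simp⟩
          _ <+: w := hw3
  · -- incomparable
    refine ⟨{v | s <+: v ∧ ∀ p ∈ (∅ : Set (List ℕ)), ¬ p <+: v},
      {v | t <+: v ∧ ∀ p ∈ (∅ : Set (List ℕ)), ¬ p <+: v},
      afOpen_aux _ _ (by intro v; simp [Set.Subsingleton]),
      afOpen_aux _ _ (by intro v; simp [Set.Subsingleton]),
      ⟨List.prefix_refl s, by simp⟩, ⟨List.prefix_refl t, by simp⟩, ?_⟩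
    rw [Set.disjoint_left]
    rintro w ⟨hw1, -⟩ ⟨hw2, -⟩
    rcases List.prefix_or_prefix_of_prefix hw1 hw2 with h' | h'
    · exact hs h'
    · exact h h'

theorem afT2 : @T2Space (List ℕ) afTop := by
  letI := afTop
  constructor
  intro x y hxy
  by_cases h : y <+: x
  · have hx : ¬ x <+: y := fun h' => hxy (h'.eq_of_length (le_antisymm h'.length_le h.length_le))
    obtain ⟨u, v, hu, hv, hyu, hxv, hd⟩ := afSep y x (Ne.symm hxy) hx
    exact ⟨v, u, hv, hu, hxv, hyu, hd.symm⟩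
  · exact afSep x y hxy h

theorem exists_len {V : Set (List ℕ)} (hV : afOpen V) {x : List ℕ} (hx : x ∈ V) :
    ∀ n, x.length ≤ n → ∃ v ∈ V, v.length = n := by
  intro n hn
  induction n, hn using Nat.le_induction with
  | base => exact ⟨x, hx, rfl⟩
  | succ n hn ih =>
    obtain ⟨v, hvV, hvl⟩ := ih
    obtain ⟨m, hm⟩ := (hV v hvV).exists
    exact ⟨v ++ [m], hm, by simp [hvl]⟩

theorem af_compact_lengths {K : Set (List ℕ)} (hK : @IsCompact (List ℕ) afTop K) :
    (List.length '' K).Finite := by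
  letI := afTop
  by_contra hinf
  replace hinf : (List.length '' K).Infinite := hinf
  set L := List.length '' K with hL
  have hch : ∀ n ∈ L, ∃ s ∈ K, s.length = n := by
    intro n hn
    obtain ⟨s, hs, hsl⟩ := hn
    exact ⟨s, hs, hsl⟩
  choose! c hcK hcl using hch
  set S : Set (List ℕ) := c '' L with hS
  have hSK : S ⊆ K := by rintro _ ⟨n, hn, rfl⟩; exact hcK n hn
  have hSlen : ∀ s ∈ S, ∀ s' ∈ S, s.length = s'.length → s = s' := by
    rintro _ ⟨n, hn, rfl⟩ _ ⟨n', hn', rfl⟩ hlen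
    rw [hcl n hn, hcl n' hn'] at hlen
    rw [hlen]
  -- the open cover
  set U : List ℕ → Set (List ℕ) :=
    fun x => {v | x <+: v ∧ ∀ p ∈ {p | p ∈ S ∧ p ≠ x ∧ x <+: p}, ¬ p <+: v} with hUdef
  have hUopen : ∀ x, IsOpen (U x) := by
    intro x
    apply afOpen_aux
    intro v m hm m' hm'
    simp only [Set.mem_setOf_eq] at hm hm'
    have heq : v ++ [m] = v ++ [m'] := by
      apply hSlen _ hm.1 _ hm'.1
      simp
    simpa using List.append_cancel_left heq
  have hxU : ∀ x, x ∈ U x := by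
    intro x
    refine ⟨List.prefix_refl x, ?_⟩
    rintro p ⟨-, hne, hpref⟩ hpx
    exact hne (hpx.eq_of_length (le_antisymm hpx.length_le hpref.length_le))
  have hcover : K ⊆ ⋃ x : K, U x :=
    fun x hx => Set.mem_iUnion.mpr ⟨⟨x, hx⟩, hxU x⟩
  obtain ⟨t, ht⟩ := hK.elim_finite_subcover (fun x : K => U x) (fun x => hUopen x) hcover
  -- every element of S equals some element of t
  have hSsub : S ⊆ (fun x : K => (x : List ℕ)) '' t := by
    intro s hs
    have := ht (hSK hs)
    rw [Set.mem_iUnion₂] at this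
    obtain ⟨x, hxt, hsx⟩ := this
    obtain ⟨hpref, hblock⟩ := hsx
    by_cases hsex : s = (x : List ℕ)
    · exact ⟨x, hxt, hsex.symm⟩
    · exact absurd (List.prefix_refl s) (hblock s ⟨hs, hsex, hpref⟩)
  have hSfin : S.Finite := Set.Finite.subset (t.finite_toSet.image _) hSsub
  have hSinf : S.Infinite := by
    apply Set.Infinite.image _ hinf
    intro n hn n' hn' h
    have := congrArg List.length h
    rwa [hcl n hn, hcl n' hn'] at this
  exact hSinf hSfin

theorem stmt17 :
    ∃ τ : TopologicalSpace (List ℕ),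
      @T2Space (List ℕ) τ ∧
      (∀ U : Set (List ℕ), IsOpen[τ] U ↔
        ∀ s ∈ U, ∀ᶠ m in Filter.atTop, s ++ [m] ∈ U) ∧
      ∃ f : List ℕ → ℝ,
        (∀ K : Set (List ℕ), @IsCompact (List ℕ) τ K → IsCompact (f '' K)) ∧
        (∀ x : List ℕ, ∀ U ∈ @nhds (List ℕ) τ x, (f '' U).Infinite) ∧
        (∀ x : List ℕ, ¬ @ContinuousAt (List ℕ) ℝ τ _ f x) := by
  refine ⟨afTop, afT2, fun U => Iff.rfl, fun s => 1 / ((s.length : ℝ) + 1), ?_, ?_, ?_⟩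
  · -- compact preserving
    intro K hK
    letI := afTop
    have h1 : (List.length '' K).Finite := af_compact_lengths hK
    have h2 : (fun s : List ℕ => 1 / ((s.length : ℝ) + 1)) '' K
        = (fun n : ℕ => 1 / ((n : ℝ) + 1)) '' (List.length '' K) := by
      rw [Set.image_image]
    rw [h2]
    exact (h1.image _).isCompact
  · -- locally infinite
    intro x U hU
    letI := afTop
    rw [mem_nhds_iff] at hU
    obtain ⟨V, hVU, hVopen, hxV⟩ := hU
    have hlen : Set.Ici x.length ⊆ List.length '' V := by
      intro n hn
      obtain ⟨v, hv, hvl⟩ := exists_len hVopen hxV n hn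
      exact ⟨v, hv, hvl⟩
    have hlinf : (List.length '' V).Infinite :=
      Set.Infinite.mono hlen (Set.Ici_infinite _)
    have hinj : Function.Injective (fun n : ℕ => 1 / ((n : ℝ) + 1)) := by
      intro n m h
      simp only [one_div] at h
      have := inv_injective h
      have : (n : ℝ) = m := by linarith [this]
      exact_mod_cast this
    have h3 : ((fun n : ℕ => 1 / ((n : ℝ) + 1)) '' (List.length '' V)).Infinite :=
      hlinf.image hinj.injOn
    have heq : (fun n : ℕ => 1 / ((n : ℝ) + 1)) '' (List.length '' V)
        = (fun s : List ℕ => 1 / ((s.length : ℝ) + 1)) '' V := Set.image_image _ _ _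
    rw [heq] at h3
    exact h3.mono (Set.image_mono hVU)
  · -- discontinuous everywhere
    intro x hc
    letI := afTop
    have hlt : 1 / ((x.length : ℝ) + 2) < 1 / ((x.length : ℝ) + 1) := by
      apply one_div_lt_one_div_of_lt
      · positivity
      · linarith
    have hmem : (fun s : List ℕ => 1 / ((s.length : ℝ) + 1)) ⁻¹'
        (Set.Ioi (1 / ((x.length : ℝ) + 2))) ∈ 𝓝 x := hc (Ioi_mem_nhds hlt)
    rw [mem_nhds_iff] at hmem
    obtain ⟨V, hVsub, hVopen, hxV⟩ := hmem
    obtain ⟨m, hm⟩ := (hVopen x hxV).exists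
    have := hVsub hm
    simp only [Set.mem_preimage, Set.mem_Ioi, List.length_append, List.length_singleton] at this
    have heq : ((x.length + 1 : ℕ) : ℝ) + 1 = (x.length : ℝ) + 2 := by push_cast; ring
    rw [heq] at this
    exact lt_irrefl _ this
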